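/- arXiv:2001.00845 — 3 statements merged into one kernel-verified Lean document; each statement's English description precedes it below -/
import Mathlib

section
/- For every pair of unitary operators U and V on a Hilbert space, the Hausdorff distance between their spectra is bounded by the operator norm of their difference: d_H(σ(U), σ(V)) ≤ ‖U − V‖. -/
open Metric

/-- Key estimate: if `V` is star-normal and `z` is in the spectrum of `U`, then the
distance from `z` to the spectrum of `V` is at most `‖U - V‖`. -/
lemma infDist_spectrum_aux {A : Type*} [CStarAlgebra A] (U V : A)
    (hV : IsStarNormal V) (z : ℂ) (hz : z ∈ spectrum ℂ U) :
    Metric.infDist z (spectrum ℂ V) ≤ ‖U - V‖ := by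
  by_contra hcon
  push_neg at hcon
  set d := Metric.infDist z (spectrum ℂ V) with hd
  have hd0 : 0 < d := lt_of_le_of_lt (norm_nonneg _) hcon
  have hznot : z ∉ spectrum ℂ V := fun hmem =>
    hd0.ne' (by simpa [hd] using Metric.infDist_zero_of_mem hmem)
  obtain ⟨u, hu⟩ := spectrum.notMem_iff.mp hznot
  -- `star u` commutes with `u`
  have hcomm : Commute (star (u : A)) (u : A) := by
    rw [hu, star_sub, ← algebraMap_star_comm]
    exact (Algebra.commute_algebraMap_left _ _).sub_left
      ((Algebra.commute_algebraMap_right _ _).sub_right hV.star_comm_self)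
  have hnormalinv : IsStarNormal ((u⁻¹ : Aˣ) : A) := by
    constructor
    rw [← Units.coe_star_inv]
    exact (((Units.coe_star u ▸ hcomm).units_inv_left).units_inv_right)
  -- spectral radius bound for the inverse
  have hspec : spectrum ℂ ((u⁻¹ : Aˣ) : A) = (spectrum ℂ (u : A))⁻¹ :=
    (spectrum.map_inv u).symm
  have hbound : ∀ k ∈ spectrum ℂ ((u⁻¹ : Aˣ) : A), ‖k‖ ≤ 1 / d := by
    intro k hk
    rw [hspec, Set.mem_inv] at hk
    rw [hu, ← spectrum.singleton_sub_eq] at hk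
    obtain ⟨zz, hzz, v, hv, hsum⟩ := Set.mem_sub.mp hk
    rw [Set.mem_singleton_iff] at hzz
    rw [hzz] at hsum
    have hdv : d ≤ ‖k⁻¹‖ := by
      rw [← hsum]
      calc d ≤ dist z v := Metric.infDist_le_dist_of_mem hv
        _ = ‖z - v‖ := by rw [dist_eq_norm]
    have hk0 : k ≠ 0 := by
      rintro rfl
      simp only [inv_zero, norm_zero] at hdv
      exact absurd hdv (not_le.mpr hd0)
    rw [norm_inv] at hdv
    rw [div_eq_mul_inv, one_mul]
    calc ‖k‖ = (‖k‖⁻¹)⁻¹ := (inv_inv _).symm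
      _ ≤ d⁻¹ := by
        apply inv_anti₀ hd0 hdv
  have hnorminv : ‖((u⁻¹ : Aˣ) : A)‖ ≤ 1 / d := by
    have h1 : spectralRadius ℂ ((u⁻¹ : Aˣ) : A) = ‖((u⁻¹ : Aˣ) : A)‖₊ :=
      IsStarNormal.spectralRadius_eq_nnnorm _
    have h2 : spectralRadius ℂ ((u⁻¹ : Aˣ) : A) ≤ ENNReal.ofReal (1 / d) := by
      rw [spectralRadius]
      refine iSup₂_le fun k hk => ?_
      rw [← enorm_eq_nnnorm, ← ofReal_norm]
      exact ENNReal.ofReal_le_ofReal (hbound k hk)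
    rw [h1, ← enorm_eq_nnnorm, ← ofReal_norm] at h2
    exact (ENNReal.ofReal_le_ofReal_iff (by positivity)).mp h2
  -- now `algebraMap ℂ A z - U` is a unit, contradiction
  set t : A := ((u⁻¹ : Aˣ) : A) * (U - V) with ht
  have htlt : ‖t‖ < 1 := by
    calc ‖t‖ ≤ ‖((u⁻¹ : Aˣ) : A)‖ * ‖U - V‖ := norm_mul_le _ _
      _ ≤ (1 / d) * ‖U - V‖ := by
        apply mul_le_mul_of_nonneg_right hnorminv (norm_nonneg _)
      _ < (1 / d) * d := by
        apply mul_lt_mul_of_pos_left hcon (by positivity)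
      _ = 1 := by field_simp
  have hfact : algebraMap ℂ A z - U = (u : A) * (1 - t) := by
    rw [mul_sub, mul_one, ht, ← mul_assoc, Units.mul_inv, one_mul, hu]
    abel
  have : IsUnit (algebraMap ℂ A z - U) := by
    rw [hfact]
    exact u.isUnit.mul (Units.oneSub t htlt).isUnit
  exact spectrum.mem_iff.mp hz this

/-- For every pair of unitary operators `U` and `V` on a complex Hilbert space,
the Hausdorff distance between their spectra is bounded by `‖U - V‖`. -/
theorem hausdorffDist_spectrum_le_norm_sub
    {H : Type*} [NormedAddCommGroup H] [InnerProductSpace ℂ H] [CompleteSpace H]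
    (U V : H →L[ℂ] H)
    (hU : U ∈ unitary (H →L[ℂ] H)) (hV : V ∈ unitary (H →L[ℂ] H)) :
    Metric.hausdorffDist (spectrum ℂ U) (spectrum ℂ V) ≤ ‖U - V‖ := by
  have hUn : IsStarNormal U := ⟨hU.1.trans hU.2.symm⟩
  have hVn : IsStarNormal V := ⟨hV.1.trans hV.2.symm⟩
  refine Metric.hausdorffDist_le_of_infDist (norm_nonneg _) ?_ ?_
  · exact fun x hx => infDist_spectrum_aux U V hVn x hx
  · intro x hx
    rw [← norm_neg, neg_sub]
    exact infDist_spectrum_aux V U hUn x hx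
end

section
/- Let μ be a finite Borel measure on the circle ∂𝔻 and S a countable dense subset of ∂𝔻. Let 𝒥 be the countable collection of all finite unions of open arcs with endpoints in S, and 𝒥_ε = {J ∈ 𝒥 : Leb(J) < ε}. Then for every Borel set B, the singular part μ_s of μ (with respect to Lebesgue measure on ∂𝔻) satisfies μ_s(B) = lim_{ε→0} sup_{J ∈ 𝒥_ε} μ(B ∩ J). -/
open MeasureTheory Filter

instance : Fact (0 < 2 * Real.pi) := ⟨by positivity⟩

/-- `J` is a finite union of open arcs of the circle with endpoints in `S`. -/
def IsFiniteArcUnion (S : Set (AddCircle (2 * Real.pi)))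
    (J : Set (AddCircle (2 * Real.pi))) : Prop :=
  ∃ (n : ℕ) (a b : Fin n → ℝ),
    (∀ i, ((a i : AddCircle (2 * Real.pi)) ∈ S ∧ (b i : AddCircle (2 * Real.pi)) ∈ S)) ∧
    J = ⋃ i, (fun x : ℝ => (x : AddCircle (2 * Real.pi))) '' Set.Ioo (a i) (b i)

lemma IsFiniteArcUnion.isOpen {S J : Set (AddCircle (2 * Real.pi))}
    (h : IsFiniteArcUnion S J) : IsOpen J := by
  obtain ⟨n, a, b, -, rfl⟩ := h
  exact isOpen_iUnion fun i =>
    QuotientAddGroup.isOpenMap_coe _ isOpen_Ioo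

/-- Basis lemma: any point of an open set of the circle lies in an arc with endpoints
mapping into a dense set `S`, and the arc is contained in the open set. -/
lemma exists_arc_subset {S : Set (AddCircle (2 * Real.pi))} (hSdense : Dense S)
    {U : Set (AddCircle (2 * Real.pi))} (hU : IsOpen U) {x : AddCircle (2 * Real.pi)}
    (hx : x ∈ U) :
    ∃ a b : ℝ, ((a : AddCircle (2 * Real.pi)) ∈ S ∧ (b : AddCircle (2 * Real.pi)) ∈ S) ∧
      x ∈ (fun y : ℝ => (y : AddCircle (2 * Real.pi))) '' Set.Ioo a b ∧
      (fun y : ℝ => (y : AddCircle (2 * Real.pi))) '' Set.Ioo a b ⊆ U := by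
  set π : ℝ → AddCircle (2 * Real.pi) := fun y : ℝ => (y : AddCircle (2 * Real.pi))
  have hπopen : IsOpenMap π := fun V hV => QuotientAddGroup.isOpenMap_coe _ hV
  have hπcont : Continuous π := continuous_quotient_mk'
  obtain ⟨x₀, rfl⟩ := QuotientAddGroup.mk_surjective x
  have hV : IsOpen (π ⁻¹' U) := hU.preimage hπcont
  obtain ⟨δ, hδ, hball⟩ := Metric.isOpen_iff.1 hV x₀ hx
  rw [Real.ball_eq_Ioo] at hball
  -- pick the left endpoint
  obtain ⟨s₁, hs₁S, hs₁⟩ := hSdense.exists_mem_open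
    (hπopen _ (isOpen_Ioo (a := x₀ - δ) (b := x₀)))
    ((Set.nonempty_Ioo.2 (by linarith)).image π)
  obtain ⟨a, ha, has⟩ := hs₁
  obtain ⟨s₂, hs₂S, hs₂⟩ := hSdense.exists_mem_open
    (hπopen _ (isOpen_Ioo (a := x₀) (b := x₀ + δ)))
    ((Set.nonempty_Ioo.2 (by linarith)).image π)
  obtain ⟨b, hb, hbs⟩ := hs₂
  refine ⟨a, b, ⟨by rw [← has] at hs₁S; exact hs₁S, by rw [← hbs] at hs₂S; exact hs₂S⟩,
    ⟨x₀, ⟨ha.2, hb.1⟩, rfl⟩, ?_⟩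
  have h1 : Set.Ioo a b ⊆ Set.Ioo (x₀ - δ) (x₀ + δ) :=
    Set.Ioo_subset_Ioo (le_of_lt ha.1) (le_of_lt hb.2)
  exact ((Set.image_mono (f := π) h1).trans (Set.image_mono (f := π) hball)).trans
    (Set.image_preimage_subset π U)

/-- For an open set `U`, `μ (B ∩ U)` is approximated by finite arc unions inside `U`. -/
lemma measure_inter_open_le_iSup (μ : Measure (AddCircle (2 * Real.pi)))
    {S : Set (AddCircle (2 * Real.pi))} (hSdense : Dense S)
    {U : Set (AddCircle (2 * Real.pi))} (hU : IsOpen U) (B : Set (AddCircle (2 * Real.pi)))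
    {ε : ℝ} (hUε : volume U < ENNReal.ofReal ε) :
    μ (B ∩ U) ≤ ⨆ (J : Set (AddCircle (2 * Real.pi)))
      (_ : IsFiniteArcUnion S J ∧ volume J < ENNReal.ofReal ε), μ (B ∩ J) := by
  classical
  set π : ℝ → AddCircle (2 * Real.pi) := fun y : ℝ => (y : AddCircle (2 * Real.pi))
  set 𝒜 : Set (Set (AddCircle (2 * Real.pi))) :=
    {V | (∃ a b : ℝ, ((a : AddCircle (2 * Real.pi)) ∈ S ∧ (b : AddCircle (2 * Real.pi)) ∈ S) ∧
      V = π '' Set.Ioo a b) ∧ V ⊆ U} with h𝒜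
  have h𝒜open : ∀ V ∈ 𝒜, IsOpen V := by
    rintro V ⟨⟨a, b, -, rfl⟩, -⟩
    exact QuotientAddGroup.isOpenMap_coe _ isOpen_Ioo
  have h𝒜U : ⋃₀ 𝒜 = U := by
    apply Set.Subset.antisymm
    · exact Set.sUnion_subset fun V hV => hV.2
    · intro x hx
      obtain ⟨a, b, hab, hmem, hsub⟩ := exists_arc_subset hSdense hU hx
      exact ⟨π '' Set.Ioo a b, ⟨⟨a, b, hab, rfl⟩, hsub⟩, hmem⟩
  obtain ⟨T, hTc, hT𝒜, hTU⟩ := TopologicalSpace.isOpen_sUnion_countable 𝒜 h𝒜open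
  rw [h𝒜U] at hTU
  rcases T.eq_empty_or_nonempty with rfl | hTne
  · simp only [Set.sUnion_empty] at hTU
    rw [← hTU]
    simp
  obtain ⟨f, hf⟩ := Set.Countable.exists_eq_range hTc hTne
  have hmem : ∀ n, f n ∈ 𝒜 := fun n => hT𝒜 (hf ▸ Set.mem_range_self n)
  choose a b habS hfeq using fun n => (hmem n).1
  have hsubU : ∀ n, f n ⊆ U := fun n => (hmem n).2
  set K : ℕ → Set (AddCircle (2 * Real.pi)) := fun n => ⋃ i : Fin (n + 1), f i with hK
  have hKarc : ∀ n, IsFiniteArcUnion S (K n) := fun n =>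
    ⟨n + 1, fun i => a i, fun i => b i, fun i => habS i,
      Set.iUnion_congr fun i => hfeq i⟩
  have hKsub : ∀ n, K n ⊆ U := fun n => Set.iUnion_subset fun i => hsubU i
  have hUeq : U = ⋃ n, K n := by
    rw [← hTU, hf, Set.sUnion_range]
    apply Set.Subset.antisymm
    · exact Set.iUnion_subset fun m =>
        Set.subset_iUnion_of_subset m (Set.subset_iUnion (fun i : Fin (m + 1) => f i)
          ⟨m, Nat.lt_succ_self m⟩)
    · exact Set.iUnion_subset fun n => Set.iUnion_subset fun i =>
        Set.subset_iUnion (fun m : ℕ => f m) i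
  have hdir : Directed (· ⊆ ·) fun n => B ∩ K n := by
    apply (Monotone.directed_le)
    intro n m hnm
    refine Set.inter_subset_inter_right _ ?_
    exact Set.iUnion_subset fun i =>
      Set.subset_iUnion (fun j : Fin (m + 1) => f j) ⟨i, by omega⟩
  have : μ (B ∩ U) = ⨆ n, μ (B ∩ K n) := by
    rw [hUeq, Set.inter_iUnion]
    exact hdir.measure_iUnion
  rw [this]
  refine iSup_le fun n => ?_
  refine le_iSup₂_of_le (K n)
    ⟨hKarc n, lt_of_le_of_lt (measure_mono (hKsub n)) hUε⟩ le_rfl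

/-- For a finite Borel measure `μ` on the circle and a countable dense set `S` of endpoints,
the singular part of `μ` with respect to Lebesgue measure satisfies
`μ_s(B) = lim_{ε→0⁺} sup { μ(B ∩ J) : J a finite union of arcs with endpoints in S, Leb(J) < ε }`. -/
theorem singularPart_eq_limit_sup_over_small_arc_unions
    (μ : Measure (AddCircle (2 * Real.pi))) [IsFiniteMeasure μ]
    (S : Set (AddCircle (2 * Real.pi))) (hScount : S.Countable) (hSdense : Dense S)
    (B : Set (AddCircle (2 * Real.pi))) (hB : MeasurableSet B) :
    Tendsto
      (fun ε : ℝ =>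
        ⨆ (J : Set (AddCircle (2 * Real.pi)))
          (_ : IsFiniteArcUnion S J ∧ volume J < ENNReal.ofReal ε), μ (B ∩ J))
      (nhdsWithin 0 (Set.Ioi 0))
      (nhds (Measure.singularPart μ volume B)) := by
  classical
  set ν : Measure (AddCircle (2 * Real.pi)) := μ.singularPart volume with hν
  have hνle : ∀ A, ν A ≤ μ A := fun A => Measure.singularPart_le μ volume A
  have hνB_ne_top : ν B ≠ ⊤ := ((hνle B).trans_lt (measure_lt_top μ B)).ne
  -- the singular set
  obtain ⟨s, hsm, hs1, hs2⟩ := μ.mutuallySingular_singularPart volume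
  -- lower bound, valid for every ε > 0
  have lower : ∀ ε : ℝ, 0 < ε →
      ν B ≤ ⨆ (J : Set (AddCircle (2 * Real.pi)))
        (_ : IsFiniteArcUnion S J ∧ volume J < ENNReal.ofReal ε), μ (B ∩ J) := by
    intro ε hε
    obtain ⟨U, hNU, hUopen, hUlt⟩ := Set.exists_isOpen_lt_of_lt sᶜ (ENNReal.ofReal ε)
      (by rw [hs2]; exact ENNReal.ofReal_pos.2 hε)
    have h1 : ν B ≤ μ (B ∩ U) := by
      have e1 : ν (B ∩ s) + ν (B \ s) = ν B := measure_inter_add_diff B hsm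
      have e2 : ν (B ∩ s) = 0 := le_antisymm ((measure_mono Set.inter_subset_right).trans hs1.le)
        zero_le
      have e3 : ν B = ν (B \ s) := by rw [← e1, e2, zero_add]
      calc ν B = ν (B \ s) := e3
        _ ≤ μ (B \ s) := hνle _
        _ ≤ μ (B ∩ U) := measure_mono (by
            intro x hx
            exact ⟨hx.1, hNU hx.2⟩)
    exact h1.trans (measure_inter_open_le_iSup μ hSdense hUopen B hUlt)
  -- upper bound
  rw [ENNReal.tendsto_nhds hνB_ne_top]
  intro δ hδ
  obtain ⟨δ₁, hδ₁, hδ₁prop⟩ := exists_pos_setLIntegral_lt_of_measure_lt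
    (μ := (volume : Measure (AddCircle (2 * Real.pi)))) (f := μ.rnDeriv volume)
    (Measure.lintegral_rnDeriv_lt_top μ volume).ne (ne_of_gt hδ)
  obtain ⟨c, hc0, hcδ₁⟩ := exists_between hδ₁
  have hc_ne_top : c ≠ ⊤ := (hcδ₁.trans_le le_top).ne
  set ε₀ : ℝ := c.toReal with hε₀def
  have hε₀pos : 0 < ε₀ := ENNReal.toReal_pos (ne_of_gt hc0) hc_ne_top
  filter_upwards [Ioc_mem_nhdsGT hε₀pos] with ε hε
  constructor
  · exact le_trans tsub_le_self (lower ε hε.1)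
  · refine iSup₂_le fun J hJ => ?_
    obtain ⟨hJarc, hJvol⟩ := hJ
    have hJmeas : MeasurableSet J := hJarc.isOpen.measurableSet
    have hJvol' : volume J < δ₁ := by
      refine lt_of_lt_of_le hJvol (le_trans ?_ hcδ₁.le)
      rw [hε₀def] at hε
      calc ENNReal.ofReal ε ≤ ENNReal.ofReal c.toReal := ENNReal.ofReal_le_ofReal hε.2
        _ = c := ENNReal.ofReal_toReal hc_ne_top
    have hdecomp : ν + volume.withDensity (μ.rnDeriv volume) = μ :=
      μ.singularPart_add_rnDeriv volume
    have : μ (B ∩ J) = ν (B ∩ J) + volume.withDensity (μ.rnDeriv volume) (B ∩ J) := by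
      conv_lhs => rw [← hdecomp]
      rfl
    rw [this]
    refine add_le_add (measure_mono Set.inter_subset_left) ?_
    calc volume.withDensity (μ.rnDeriv volume) (B ∩ J)
        ≤ volume.withDensity (μ.rnDeriv volume) J := measure_mono Set.inter_subset_right
      _ = ∫⁻ x in J, μ.rnDeriv volume x ∂volume := withDensity_apply _ hJmeas
      _ ≤ δ := (hδ₁prop J hJvol').le
end

section
/- Let Ω be a compact metric space, T : Ω → Ω a minimal homeomorphism, and ω ↦ U_ω a map into bounded operators on ℓ²(ℤ) satisfying the covariance relation U_{Tω} = S U_ω S* (S the bilateral shift) and strong continuity: ωₙ → ω implies U_{ωₙ} → U_ω strongly together with U_{ωₙ}* → U_ω* strongly. Then σ(U_ω) is independent of ω ∈ Ω. -/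
open Filter

open ContinuousLinearMap


lemma isUnit_of_bddBelow_star {H : Type*} [NormedAddCommGroup H]
    [InnerProductSpace ℂ H] [CompleteSpace H] (B : H →L[ℂ] H) (C : ℝ)
    (h1 : ∀ ψ, ‖ψ‖ ≤ C * ‖B ψ‖)
    (h2 : ∀ ψ, ‖ψ‖ ≤ C * ‖(star B) ψ‖) : IsUnit B := by
  rw [ContinuousLinearMap.isUnit_iff_bijective,
    ContinuousLinearMap.bijective_iff_dense_range_and_antilipschitz]
  have hC : ∀ ψ, ‖ψ‖ ≤ ((⟨max C 0, le_max_right _ _⟩ : NNReal) : ℝ) * ‖B ψ‖ := fun ψ =>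
    (h1 ψ).trans (mul_le_mul_of_nonneg_right (le_max_left _ _) (norm_nonneg _))
  have h_anti := B.antilipschitz_of_bound hC
  refine ⟨?_, _, h_anti⟩
  have _inst := h_anti.completeSpace_range_clm
  rw [Submodule.topologicalClosure_eq_top_iff, Submodule.eq_bot_iff]
  intro x hx
  have key : (inner ℂ (B ((star B) x)) x : ℂ) = 0 :=
    (Submodule.mem_orthogonal _ x).mp hx (B ((star B) x)) ⟨(star B) x, rfl⟩
  have h0 : (inner ℂ ((star B) x) ((star B) x) : ℂ) = 0 := by
    rw [ContinuousLinearMap.star_eq_adjoint, ContinuousLinearMap.adjoint_inner_left,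
      ← ContinuousLinearMap.star_eq_adjoint]
    exact inner_eq_zero_symm.mpr key
  have hBx : (star B) x = 0 := inner_self_eq_zero.mp h0
  have := h2 x
  rw [hBx, norm_zero, mul_zero] at this
  exact norm_le_zero_iff.mp this

set_option maxHeartbeats 1000000 in
lemma spectrum_subset_of_minimal_covariant
    {Ω : Type*} [MetricSpace Ω] {H : Type*} [NormedAddCommGroup H]
    [InnerProductSpace ℂ H] [CompleteSpace H]
    (T : Ω ≃ₜ Ω)
    (hmin : ∀ ω : Ω, Dense {x : Ω | ∃ n : ℤ, x = (T.toEquiv ^ n) ω})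
    (S : H →L[ℂ] H)
    (hSunitary : S ∈ unitary (H →L[ℂ] H))
    (U : Ω → (H →L[ℂ] H))
    (hcov : ∀ ω, U (T ω) = S * U ω * star S)
    (hstrong : ∀ (ωn : ℕ → Ω) (ω : Ω), Tendsto ωn atTop (nhds ω) →
      ∀ ψ : H,
        Tendsto (fun n => U (ωn n) ψ) atTop (nhds (U ω ψ)) ∧
        Tendsto (fun n => (star (U (ωn n))) ψ) atTop (nhds ((star (U ω)) ψ)))
    (ω₁ ω₂ : Ω) : spectrum ℂ (U ω₂) ⊆ spectrum ℂ (U ω₁) := by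
  intro z hzmem
  by_contra hz
  apply absurd hzmem
  rw [spectrum.notMem_iff] at hz ⊢
  obtain ⟨u, hu⟩ := hz
  set 𝒮 : unitary (H →L[ℂ] H) := ⟨S, hSunitary⟩ with h𝒮def
  have hcovinv : ∀ x : Ω, U x = star S * U (T x) * S := by
    intro x
    rw [hcov x]
    symm
    calc star S * (S * U x * star S) * S
        = (star S * S) * U x * (star S * S) := by simp only [mul_assoc]
      _ = U x := by rw [hSunitary.1, one_mul, mul_one]
  have hWcov : ∀ n : ℤ, ∀ ω : Ω, U ((T.toEquiv ^ n) ω)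
      = (↑(𝒮 ^ n) : H →L[ℂ] H) * U ω * star (↑(𝒮 ^ n) : H →L[ℂ] H) := by
    intro n
    induction n using Int.induction_on with
    | zero =>
      intro ω
      simp only [zpow_zero, OneMemClass.coe_one, star_one, one_mul, mul_one]
      rfl
    | succ n ih =>
      intro ω
      have hTe : (T.toEquiv ^ ((n : ℤ) + 1)) ω = T ((T.toEquiv ^ (n : ℤ)) ω) := by
        rw [add_comm, zpow_add, zpow_one]
        rfl
      have h1 : (𝒮 ^ ((n : ℤ) + 1)) = 𝒮 * 𝒮 ^ (n : ℤ) := by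
        rw [add_comm, zpow_add, zpow_one]
      rw [hTe, hcov, ih, h1]
      have hco : (↑(𝒮 * 𝒮 ^ (n : ℤ)) : H →L[ℂ] H) = S * (↑(𝒮 ^ (n : ℤ)) : H →L[ℂ] H) := rfl
      rw [hco, star_mul]
      simp only [mul_assoc]
    | pred n ih =>
      intro ω
      have hx : T ((T.toEquiv ^ (-(n : ℤ) - 1)) ω) = (T.toEquiv ^ (-(n : ℤ))) ω := by
        conv_rhs => rw [show (-(n : ℤ)) = 1 + (-(n : ℤ) - 1) by ring, zpow_add, zpow_one]
        rfl
      rw [hcovinv ((T.toEquiv ^ (-(n : ℤ) - 1)) ω), hx, ih]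
      have h1 : (𝒮 ^ (-(n : ℤ) - 1)) = 𝒮⁻¹ * 𝒮 ^ (-(n : ℤ)) := by
        rw [show (-(n : ℤ) - 1) = (-1) + (-(n : ℤ)) by ring, zpow_add, zpow_neg_one]
      rw [h1]
      have hco : (↑(𝒮⁻¹ * 𝒮 ^ (-(n : ℤ))) : H →L[ℂ] H)
          = star S * (↑(𝒮 ^ (-(n : ℤ))) : H →L[ℂ] H) := rfl
      rw [hco, star_mul, star_star]
      simp only [mul_assoc]
  set C := ‖(↑u⁻¹ : H →L[ℂ] H)‖ with hC
  have hbound : ∀ n : ℤ, ∀ ψ : H,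
      ‖ψ‖ ≤ C * ‖(algebraMap ℂ (H →L[ℂ] H) z - U ((T.toEquiv ^ n) ω₁)) ψ‖ ∧
      ‖ψ‖ ≤ C * ‖(star (algebraMap ℂ (H →L[ℂ] H) z - U ((T.toEquiv ^ n) ω₁))) ψ‖ := by
    intro n ψ
    set W : H →L[ℂ] H := (↑(𝒮 ^ n) : H →L[ℂ] H) with hWdef
    have hW : W ∈ unitary (H →L[ℂ] H) := (𝒮 ^ n).prop
    set V : H →L[ℂ] H := algebraMap ℂ (H →L[ℂ] H) z - U ((T.toEquiv ^ n) ω₁) with hV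
    have hVk : V = W * (↑u : H →L[ℂ] H) * star W := by
      rw [hV, hWcov n ω₁, hu, mul_sub, sub_mul]
      congr 1
      symm
      calc W * algebraMap ℂ (H →L[ℂ] H) z * star W
          = algebraMap ℂ (H →L[ℂ] H) z * (W * star W) := by
            rw [← Algebra.commutes, mul_assoc]
        _ = algebraMap ℂ (H →L[ℂ] H) z := by rw [Unitary.mul_star_self_of_mem hW, mul_one]
    set R : H →L[ℂ] H := W * (↑u⁻¹ : H →L[ℂ] H) * star W with hR
    have hRV : R * V = 1 := by
      rw [hVk, hR]
      calc W * ↑u⁻¹ * star W * (W * ↑u * star W)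
          = W * (↑u⁻¹ * ((star W * W) * (↑u * star W))) := by simp only [mul_assoc]
        _ = W * (↑u⁻¹ * (↑u * star W)) := by
            rw [Unitary.star_mul_self_of_mem hW, one_mul]
        _ = W * ((↑u⁻¹ * ↑u) * star W) := by simp only [mul_assoc]
        _ = 1 := by rw [Units.inv_mul, one_mul, Unitary.mul_star_self_of_mem hW]
    have hVR : V * R = 1 := by
      rw [hVk, hR]
      calc W * ↑u * star W * (W * ↑u⁻¹ * star W)
          = W * (↑u * ((star W * W) * (↑u⁻¹ * star W))) := by simp only [mul_assoc]
        _ = W * (↑u * (↑u⁻¹ * star W)) := by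
            rw [Unitary.star_mul_self_of_mem hW, one_mul]
        _ = W * ((↑u * ↑u⁻¹) * star W) := by simp only [mul_assoc]
        _ = 1 := by rw [Units.mul_inv, one_mul, Unitary.mul_star_self_of_mem hW]
    have hRnorm : ‖R‖ = C := by
      rw [hR, mul_assoc, CStarRing.norm_mem_unitary_mul _ hW,
        CStarRing.norm_mul_mem_unitary _ (Unitary.star_mem hW)]
    constructor
    · calc ‖ψ‖ = ‖(R * V) ψ‖ := by rw [hRV]; simp
        _ = ‖R (V ψ)‖ := rfl
        _ ≤ ‖R‖ * ‖V ψ‖ := R.le_opNorm _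
        _ = C * ‖V ψ‖ := by rw [hRnorm]
    · calc ‖ψ‖ = ‖(star R * star V) ψ‖ := by rw [← star_mul, hVR, star_one]; simp
        _ = ‖(star R) ((star V) ψ)‖ := rfl
        _ ≤ ‖star R‖ * ‖(star V) ψ‖ := (star R).le_opNorm _
        _ = C * ‖(star V) ψ‖ := by rw [norm_star, hRnorm]
  obtain ⟨x, hxmem, hxlim⟩ := mem_closure_iff_seq_limit.mp (hmin ω₁ ω₂)
  choose n hn using hxmem
  have happly : ∀ (M : H →L[ℂ] H) (ψ : H),
      (algebraMap ℂ (H →L[ℂ] H) z - M) ψ = z • ψ - M ψ := by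
    intro M ψ
    simp [Algebra.algebraMap_eq_smul_one]
  have happly' : ∀ (M : H →L[ℂ] H) (ψ : H),
      (star (algebraMap ℂ (H →L[ℂ] H) z - M)) ψ = (starRingEnd ℂ z) • ψ - (star M) ψ := by
    intro M ψ
    rw [star_sub, ← algebraMap_star_comm]
    simp [Algebra.algebraMap_eq_smul_one]
  have hb1 : ∀ ψ, ‖ψ‖ ≤ C * ‖(algebraMap ℂ (H →L[ℂ] H) z - U ω₂) ψ‖ := by
    intro ψ
    have hlim : Tendsto (fun k => C * ‖(algebraMap ℂ (H →L[ℂ] H) z - U (x k)) ψ‖) atTop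
        (nhds (C * ‖(algebraMap ℂ (H →L[ℂ] H) z - U ω₂) ψ‖)) := by
      have h1 : Tendsto (fun k => (algebraMap ℂ (H →L[ℂ] H) z - U (x k)) ψ) atTop
          (nhds ((algebraMap ℂ (H →L[ℂ] H) z - U ω₂) ψ)) := by
        simp only [happly]
        exact Tendsto.const_sub _ (hstrong x ω₂ hxlim ψ).1
      exact (h1.norm).const_mul C
    refine ge_of_tendsto' hlim fun k => ?_
    have hk := (hbound (n k) ψ).1
    rwa [← hn k] at hk
  have hb2 : ∀ ψ, ‖ψ‖ ≤ C * ‖(star (algebraMap ℂ (H →L[ℂ] H) z - U ω₂)) ψ‖ := by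
    intro ψ
    have hlim : Tendsto (fun k => C * ‖(star (algebraMap ℂ (H →L[ℂ] H) z - U (x k))) ψ‖) atTop
        (nhds (C * ‖(star (algebraMap ℂ (H →L[ℂ] H) z - U ω₂)) ψ‖)) := by
      have h1 : Tendsto (fun k => (star (algebraMap ℂ (H →L[ℂ] H) z - U (x k))) ψ) atTop
          (nhds ((star (algebraMap ℂ (H →L[ℂ] H) z - U ω₂)) ψ)) := by
        simp only [happly']
        exact Tendsto.const_sub _ (hstrong x ω₂ hxlim ψ).2
      exact (h1.norm).const_mul C
    refine ge_of_tendsto' hlim fun k => ?_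
    have hk := (hbound (n k) ψ).2
    rwa [← hn k] at hk
  exact isUnit_of_bddBelow_star _ C hb1 hb2


/-- If `T` is a minimal homeomorphism of a compact metric space `Ω`, `S` is the bilateral
shift on `ℓ²(ℤ)`, and `ω ↦ U_ω` is a covariant family of unitary operators
(`U_{Tω} = S U_ω S*`) which is strongly continuous together with adjoints, then the
spectrum `σ(U_ω)` is independent of `ω`. -/
theorem spectrum_constant_of_minimal_covariant
    {Ω : Type*} [MetricSpace Ω] [CompactSpace Ω]
    (T : Ω ≃ₜ Ω)
    (hmin : ∀ ω : Ω, Dense {x : Ω | ∃ n : ℤ, x = (T.toEquiv ^ n) ω})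
    (S : lp (fun _ : ℤ => ℂ) 2 →L[ℂ] lp (fun _ : ℤ => ℂ) 2)
    (hSunitary : S ∈ unitary (lp (fun _ : ℤ => ℂ) 2 →L[ℂ] lp (fun _ : ℤ => ℂ) 2))
    (hSshift : ∀ (ψ : lp (fun _ : ℤ => ℂ) 2) (n : ℤ), (S ψ) n = ψ (n - 1))
    (U : Ω → (lp (fun _ : ℤ => ℂ) 2 →L[ℂ] lp (fun _ : ℤ => ℂ) 2))
    (hUunitary : ∀ ω, U ω ∈ unitary (lp (fun _ : ℤ => ℂ) 2 →L[ℂ] lp (fun _ : ℤ => ℂ) 2))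
    (hcov : ∀ ω, U (T ω) = S * U ω * star S)
    (hstrong : ∀ (ωn : ℕ → Ω) (ω : Ω), Tendsto ωn atTop (nhds ω) →
      ∀ ψ : lp (fun _ : ℤ => ℂ) 2,
        Tendsto (fun n => U (ωn n) ψ) atTop (nhds (U ω ψ)) ∧
        Tendsto (fun n => (star (U (ωn n))) ψ) atTop (nhds ((star (U ω)) ψ))) :
    ∀ ω₁ ω₂ : Ω, spectrum ℂ (U ω₁) = spectrum ℂ (U ω₂) := by
  intro ω₁ ω₂
  apply Set.Subset.antisymm
  · exact spectrum_subset_of_minimal_covariant T hmin S hSunitary U hcov hstrong ω₂ ω₁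
  · exact spectrum_subset_of_minimal_covariant T hmin S hSunitary U hcov hstrong ω₁ ω₂
end
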